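/- For every integer i with 0 ≤ i ≤ N₀, one has Δ(i) = −Δ(N₀ − i). -/
import Mathlib

lemma aux (s : ℕ) (hs : 0 < s) (m n k : ℤ) (h : m + n = s * k + 1) :
    ⌈(m : ℚ) / s⌉ + ⌈(n : ℚ) / s⌉ = k + 1 := by
  have hsQ : (0:ℚ) < s := by exact_mod_cast hs
  have hsZ : (0:ℤ) < s := by exact_mod_cast hs
  set a := ⌈(m : ℚ) / s⌉ with ha
  set b := ⌈(n : ℚ) / s⌉ with hb
  have h1 : (m:ℚ) ≤ s * a := by
    have := Int.le_ceil ((m:ℚ)/s)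
    rw [div_le_iff₀ hsQ] at this; linarith
  have h2 : ((a:ℚ) - 1) * s < m := by
    have := Int.ceil_lt_add_one ((m:ℚ)/s)
    rw [← ha] at this
    rw [← lt_div_iff₀ hsQ]; linarith
  have h3 : (n:ℚ) ≤ s * b := by
    have := Int.le_ceil ((n:ℚ)/s)
    rw [div_le_iff₀ hsQ] at this; linarith
  have h4 : ((b:ℚ) - 1) * s < n := by
    have := Int.ceil_lt_add_one ((n:ℚ)/s)
    rw [← hb] at this
    rw [← lt_div_iff₀ hsQ]; linarith
  have h1' : m ≤ s * a := by exact_mod_cast h1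
  have h2' : (a - 1) * s < m := by exact_mod_cast h2
  have h3' : n ≤ s * b := by exact_mod_cast h3
  have h4' : (b - 1) * s < n := by exact_mod_cast h4
  have hk1 : k < a + b := by
    have : (s:ℤ) * k < s * (a + b) := by nlinarith
    exact lt_of_mul_lt_mul_left this (le_of_lt hsZ)
  have hk2 : a + b < k + 2 := by
    have : (s:ℤ) * (a + b) < s * (k + 2) := by nlinarith
    exact lt_of_mul_lt_mul_left this (le_of_lt hsZ)
  omega

lemma aux2 (s t : ℕ) (hs : 0 < s) (i M : ℕ) (k : ℤ)
    (h : (i:ℤ) * t + (M:ℤ) * t = s * k + 1) :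
    ⌈((i:ℚ) * t) / s⌉ + ⌈((M:ℚ) * t) / s⌉ = k + 1 := by
  have := aux s hs ((i:ℤ) * t) ((M:ℤ) * t) k h
  push_cast at this
  exact this

theorem stmt_2 (p q r : ℕ) (hp : 1 < p) (hpq : p < q) (hqr : q < r)
    (hcopq : Nat.Coprime p q) (hcopr : Nat.Coprime p r) (hcoqr : Nat.Coprime q r)
    (e0 : ℤ) (p' q' r' : ℕ)
    (hp' : p' ≤ p - 1) (hq' : q' ≤ q - 1) (hr' : r' ≤ r - 1)
    (heq : e0 * (p * q * r : ℤ) + (p' : ℤ) * q * r + (p : ℤ) * q' * r + (p : ℤ) * q * r' = -1)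
    (Δ : ℕ → ℤ)
    (hΔ : ∀ n : ℕ, Δ n =
      1 + |e0| * n - ⌈(n * p' : ℚ) / p⌉ - ⌈(n * q' : ℚ) / q⌉ - ⌈(n * r' : ℚ) / r⌉)
    (N0 : ℕ) (hN0 : (N0 : ℤ) = (p * q * r : ℤ) - p * q - q * r - p * r) :
    ∀ i : ℕ, i ≤ N0 → Δ i = -Δ (N0 - i) := by
  intro i hi
  have hpZ : (0:ℤ) < p := by exact_mod_cast hp.trans' one_pos
  have hqZ : (0:ℤ) < q := by exact_mod_cast (by omega : 0 < q)
  have hrZ : (0:ℤ) < r := by exact_mod_cast (by omega : 0 < r)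
  -- e0 < 0
  have he0 : |e0| = -e0 := by
    have h1 : (0:ℤ) ≤ (p':ℤ) * q * r + (p:ℤ) * q' * r + (p:ℤ) * q * r' := by positivity
    have he0neg : e0 < 0 := by
      by_contra h
      push_neg at h
      have h2 : (0:ℤ) ≤ e0 * ((p:ℤ) * q * r) := mul_nonneg h (by positivity)
      nlinarith
    exact abs_of_neg he0neg
  have hMi : ((N0 - i : ℕ):ℤ) = (N0:ℤ) - i := by
    have : (i:ℤ) ≤ N0 := by exact_mod_cast hi
    push_cast [Nat.cast_sub hi]; ring
  -- divisibilities
  obtain ⟨kp, hP⟩ : (p:ℤ) ∣ (N0:ℤ) * p' - 1 := by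
    refine ⟨(q:ℤ)*r*p' - q*p' - r*p' + e0*q*r + q'*r + q*r', ?_⟩
    linear_combination (p':ℤ) * hN0 - heq
  obtain ⟨kq, hQ⟩ : (q:ℤ) ∣ (N0:ℤ) * q' - 1 := by
    refine ⟨(p:ℤ)*r*q' - p*q' - r*q' + e0*p*r + p'*r + p*r', ?_⟩
    linear_combination (q':ℤ) * hN0 - heq
  obtain ⟨kr, hR⟩ : (r:ℤ) ∣ (N0:ℤ) * r' - 1 := by
    refine ⟨(p:ℤ)*q*r' - p*r' - q*r' + e0*p*q + p'*q + p*q', ?_⟩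
    linear_combination (r':ℤ) * hN0 - heq
  set M := N0 - i with hM
  have haP : ⌈((i:ℚ) * p') / p⌉ + ⌈((M:ℚ) * p') / p⌉ = kp + 1 := by
    refine aux2 p p' (by omega) i M kp ?_
    rw [hM, hMi]; linear_combination hP
  have haQ : ⌈((i:ℚ) * q') / q⌉ + ⌈((M:ℚ) * q') / q⌉ = kq + 1 := by
    refine aux2 q q' (by omega) i M kq ?_
    rw [hM, hMi]; linear_combination hQ
  have haR : ⌈((i:ℚ) * r') / r⌉ + ⌈((M:ℚ) * r') / r⌉ = kr + 1 := by
    refine aux2 r r' (by omega) i M kr ?_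
    rw [hM, hMi]; linear_combination hR
  have hkey : (p:ℤ) * q * r * (e0 * N0 + kp + kq + kr + 1) = 0 := by
    linear_combination (-((q:ℤ)*r)) * hP - ((p:ℤ)*r) * hQ - ((p:ℤ)*q) * hR + (N0:ℤ) * heq - hN0
  have hfin : e0 * N0 + kp + kq + kr + 1 = 0 := by
    have hpqr : (p:ℤ) * q * r ≠ 0 := by positivity
    exact (mul_eq_zero.mp hkey).resolve_left hpqr
  rw [hΔ i, hΔ M, he0]
  have hMZ : (M:ℤ) = (N0:ℤ) - i := hMi
  linear_combination -haP - haQ - haR - hfin - e0 * hMZ
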